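/- Let Y = (1/q)Z be an n×n rational orthogonal matrix with Z an integer matrix with gcd 1, and let q_1 | ... | q_n be the Smith normal form diagonal of Z. Then q_n = q². -/

import Mathlib

open Matrix

def gcdEntries {n : ℕ} (Z : Matrix (Fin n) (Fin n) ℤ) : ℤ :=
  Finset.univ.gcd (fun p : Fin n × Fin n => Z p.1 p.2)

theorem smith_diag_last_eq_q_sq {n : ℕ} (hn : 0 < n) (Y : Matrix (Fin n) (Fin n) ℚ)
    (hY : Yᵀ * Y = 1) (q : ℕ) (hq : 0 < q)
    (Z : Matrix (Fin n) (Fin n) ℤ) (hZ : gcdEntries Z = 1)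
    (hYZ : Y = ((1 : ℚ) / (q : ℚ)) • Z.map (fun a => (a : ℚ)))
    (d : Fin n → ℤ) (hdpos : ∀ i, 0 < d i)
    (hchain : ∀ i j : Fin n, i ≤ j → d i ∣ d j)
    (P Q : Matrix (Fin n) (Fin n) ℤ) (hP : IsUnit P.det) (hQ : IsUnit Q.det)
    (hSNF : P * Z * Q = Matrix.diagonal d) :
    d ⟨n - 1, Nat.sub_lt hn one_pos⟩ = (q : ℤ) ^ 2 := by
  have hq0 : (q:ℚ) ≠ 0 := Nat.cast_ne_zero.mpr hq.ne'
  -- Step 1: Zᵀ * Z = q² • 1 over ℚ then ℤ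
  have hZq : (Z.map (fun a : ℤ => (a:ℚ)))ᵀ * Z.map (fun a : ℤ => (a:ℚ))
      = ((q:ℚ)^2) • 1 := by
    rw [hYZ, Matrix.transpose_smul, Matrix.smul_mul, Matrix.mul_smul, smul_smul] at hY
    have h := congrArg (fun A : Matrix (Fin n) (Fin n) ℚ => ((q:ℚ)^2) • A) hY
    simp only [smul_smul] at h
    rw [show (q:ℚ)^2 * (1/(q:ℚ) * (1/(q:ℚ))) = 1 by field_simp, one_smul] at h
    exact h
  have hZZ : Zᵀ * Z = ((q:ℤ)^2) • 1 := by
    ext i j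
    have h := congrFun (congrFun hZq i) j
    simp only [Matrix.mul_apply, Matrix.transpose_apply, Matrix.map_apply,
      Matrix.smul_apply, Matrix.one_apply, smul_eq_mul] at h ⊢
    exact_mod_cast h
  haveI iP : Invertible P := P.invertibleOfIsUnitDet hP
  haveI iQ : Invertible Q := Q.invertibleOfIsUnitDet hQ
  set M : Matrix (Fin n) (Fin n) ℤ := ⅟Q * Zᵀ * ⅟P with hMdef
  have h2 : M * Matrix.diagonal d = ((q:ℤ)^2) • 1 := by
    rw [← hSNF, hMdef]
    have e1 : ⅟Q * Zᵀ * ⅟P * (P * Z * Q) = ⅟Q * (Zᵀ * Z) * Q := by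
      simp [Matrix.mul_assoc]
    rw [e1, hZZ, Matrix.mul_smul, Matrix.smul_mul, mul_one, invOf_mul_self]
  have hent : ∀ i j, M i j * d j = ((q:ℤ)^2) * (if i = j then 1 else 0) := by
    intro i j
    have h := congrFun (congrFun h2 i) j
    simpa [Matrix.mul_diagonal, Matrix.one_apply] using h
  have hm : ∀ i, M i i * d i = (q:ℤ)^2 := by
    intro i; simpa using hent i i
  have hMd : M = Matrix.diagonal (fun i => M i i) := by
    ext i j
    by_cases h : i = j
    · subst h; simp
    · have := hent i j
      rw [if_neg h, mul_zero] at this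
      have := mul_eq_zero.mp this
      rcases this with h' | h'
      · simp [Matrix.diagonal_apply_ne _ h, h']
      · exact absurd h' (hdpos j).ne'
  have hZT : Zᵀ = Q * M * P := by
    rw [hMdef]
    simp [Matrix.mul_assoc]
  set last : Fin n := ⟨n - 1, Nat.sub_lt hn one_pos⟩ with hlast
  have hkle : ∀ k : Fin n, k ≤ last := by
    intro k
    exact Fin.mk_le_mk.mpr (Nat.le_sub_one_of_lt k.isLt) |>.trans_eq rfl
  have hdiv : ∀ k : Fin n, M last last ∣ M k k := by
    intro k
    obtain ⟨t, ht⟩ := hchain k last (hkle k)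
    refine ⟨t, ?_⟩
    have h1 := hm k
    have h2' := hm last
    rw [ht] at h2'
    have : d k * M k k = d k * (M last last * t) := by
      rw [mul_comm (d k) (M k k), h1, ← h2']; ring
    exact mul_left_cancel₀ (hdpos k).ne' this
  have hdvdZ : ∀ a b : Fin n, M last last ∣ Z a b := by
    intro a b
    have : Z a b = Zᵀ b a := rfl
    rw [this, hZT, hMd, Matrix.mul_apply]
    simp only [Matrix.mul_diagonal, Matrix.diagonal_apply_eq]
    refine Finset.dvd_sum fun k _ => ?_
    exact ((hdiv k).mul_left _).mul_right _
  have hM1 : M last last ∣ 1 := by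
    rw [← hZ]
    exact Finset.dvd_gcd fun p _ => hdvdZ p.1 p.2
  have hMpos : 0 < M last last := by
    have h1 := hm last
    nlinarith [hdpos last, pow_pos (show (0:ℤ) < (q:ℤ) by exact_mod_cast hq) 2]
  have hMone : M last last = 1 := by
    rcases Int.isUnit_iff.mp (isUnit_of_dvd_one hM1) with h | h
    · exact h
    · omega
  have := hm last
  rw [hMone, one_mul] at this
  exact this
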